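/- arXiv:2101.10262 — 3 statements merged into one kernel-verified Lean document; each statement's English description precedes it below -/
import Mathlib

section
/- Let $A$ be a commutative ring, $I \subseteq A$ an ideal, and $F \colon \mathbb{N} \to \mathrm{Ideal}(A)$ a decreasing sequence of ideals (i.e. $F(n+1) \subseteq F(n)$ for all $n$) with $F(n) \subseteq I^n$ for all $n$. Assume that for every $n$: (i) $F(n) + I^{n+1} = I^n$ (that is, the induced map of graded pieces $F(n)/F(n+1) \to I^n/I^{n+1}$ is surjective), and (ii) $F(n)$ is closed in the $I$-adic topology, i.e. $\bigcap_{k \in \mathbb{N}} (F(n) + I^k) \subseteq F(n)$. Then $F(n) = I^n$ for every $n$. -/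
/-- **Key step of the unicity theorem for complete filtrations**
(key step of Theorem 1.2 = Proposition 4.9 of the paper).

If `F : ℕ → Ideal A` is a decreasing sequence of ideals with `F n ⊆ Iⁿ`, surjective on
associated graded pieces (`F n + Iⁿ⁺¹ = Iⁿ`), and each `F n` is closed in the `I`-adic
topology, then `F n = Iⁿ` for all `n`. -/
theorem filtration_eq_adic_of_gr_surjective_of_closed
    {A : Type*} [CommRing A] (I : Ideal A)
    (F : ℕ → Ideal A)
    (hdec : ∀ n, F (n + 1) ≤ F n)
    (hle : ∀ n, F n ≤ I ^ n)
    (hgr_surj : ∀ n, F n ⊔ I ^ (n + 1) = I ^ n)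
    (hclosed : ∀ n, (⨅ k : ℕ, F n ⊔ I ^ k) ≤ F n) :
    ∀ n, F n = I ^ n := by
  have hFle : ∀ m n, n ≤ m → F m ≤ F n := by
    intro m n h
    induction m with
    | zero => simp [Nat.le_zero.mp h]
    | succ m ih =>
      rcases Nat.lt_or_ge n (m+1) with h' | h'
      · exact (hdec m).trans (ih (Nat.lt_succ_iff.mp h'))
      · have : n = m + 1 := le_antisymm h h'
        simp [this]
  intro n
  refine le_antisymm (hle n) ?_
  refine le_trans ?_ (hclosed n)
  refine le_iInf fun k => ?_
  rcases Nat.lt_or_ge k n with h | h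
  · exact le_sup_of_le_right (Ideal.pow_le_pow_right h.le)
  · clear hclosed hle
    induction k with
    | zero => simp [Nat.le_zero.mp h]
    | succ k ih =>
      rcases Nat.lt_or_ge k n with h' | h'
      · have : n = k + 1 := by omega
        subst this
        exact le_sup_right
      · have hik : I ^ n ≤ F n ⊔ I ^ k := ih h'
        have : F n ⊔ I ^ k = F n ⊔ I ^ (k+1) := by
          rw [← hgr_surj k, ← sup_assoc, sup_eq_left.mpr (hFle k n h')]
        rwa [this] at hik
end

section
/- Let $A$ be a commutative ring and $I \subseteq A$ an ideal such that $A$ is $I$-adically complete and separated. Suppose $F, F' \colon \mathbb{N} \to \mathrm{Ideal}(A)$ are two filtrations, each satisfying: $F(0)=A$; decreasing ($F(n+1) \subseteq F(n)$); multiplicative ($F(m)\cdot F(n) \subseteq F(m+n)$); $F(n) \subseteq I^n$ for all $n$; $F(n) + I^{n+1} = I^n$ and $F(n) \cap I^{n+1} \subseteq F(n+1)$ for all $n$; and $\bigcap_{k} (F(n) + I^k) \subseteq F(n)$ for all $n$ (and likewise for $F'$). Then $F = F'$. In other words, there is at most one such multiplicative complete filtration on $A$ with the specified associated graded, namely the $I$-adic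 filtration. -/
/-- **Uniqueness of the multiplicative complete filtration with specified associated graded**
(the uniqueness statement drawn from Theorem 1.2 of the paper: on an `I`-adically complete
augmented algebra there is at most one multiplicative filtration satisfying the conditions
of that theorem, namely the `I`-adic filtration). -/
theorem unique_complete_multiplicative_filtration
    {A : Type*} [CommRing A] (I : Ideal A) [IsAdicComplete I A]
    (F F' : ℕ → Ideal A)
    (hF0 : F 0 = ⊤)
    (hdec : ∀ n, F (n + 1) ≤ F n)
    (hmul : ∀ m n, F m * F n ≤ F (m + n))
    (hle : ∀ n, F n ≤ I ^ n)
    (hgr_surj : ∀ n, F n ⊔ I ^ (n + 1) = I ^ n)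
    (hgr_inj : ∀ n, F n ⊓ I ^ (n + 1) ≤ F (n + 1))
    (hclosed : ∀ n, (⨅ k : ℕ, F n ⊔ I ^ k) ≤ F n)
    (hF0' : F' 0 = ⊤)
    (hdec' : ∀ n, F' (n + 1) ≤ F' n)
    (hmul' : ∀ m n, F' m * F' n ≤ F' (m + n))
    (hle' : ∀ n, F' n ≤ I ^ n)
    (hgr_surj' : ∀ n, F' n ⊔ I ^ (n + 1) = I ^ n)
    (hgr_inj' : ∀ n, F' n ⊓ I ^ (n + 1) ≤ F' (n + 1))
    (hclosed' : ∀ n, (⨅ k : ℕ, F' n ⊔ I ^ k) ≤ F' n) :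
    F = F' := by
  have key : ∀ (G : ℕ → Ideal A), (∀ n, G (n + 1) ≤ G n) → (∀ n, G n ≤ I ^ n) →
      (∀ n, G n ⊔ I ^ (n + 1) = I ^ n) → (∀ n, (⨅ k : ℕ, G n ⊔ I ^ k) ≤ G n) →
      ∀ n, G n = I ^ n := by
    intro G hd hl hs hc n
    refine le_antisymm (hl n) ?_
    have anti : Antitone G := antitone_nat_of_succ_le hd
    have step : ∀ j, I ^ n ≤ G n ⊔ I ^ (n + j) := by
      intro j
      induction j with
      | zero => simpa using le_sup_right
      | succ j ih =>
        calc I ^ n ≤ G n ⊔ I ^ (n + j) := ih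
          _ = G n ⊔ (G (n + j) ⊔ I ^ (n + j + 1)) := by rw [hs (n + j)]
          _ ≤ G n ⊔ I ^ (n + (j + 1)) := by
              rw [← Nat.add_assoc]
              exact sup_le le_sup_left (sup_le
                ((anti (Nat.le_add_right n j)).trans le_sup_left) le_sup_right)
    refine le_trans (le_iInf fun k => (step k).trans ?_) (hc n)
    exact sup_le_sup_left (Ideal.pow_le_pow_right (Nat.le_add_left k n)) _
  funext n
  rw [key F hdec hle hgr_surj hclosed n, key F' hdec' hle' hgr_surj' hclosed' n]
end

section
/- Let $R$ be a commutative ring, $M$ an $R$-module, and $F \colon \mathbb{N} \to \mathrm{Submodule}\,R\,M$ a decreasing sequence of submodules ($F(n+1) \subseteq F(n)$ for all $n$). Let $N = \bigoplus_{n \in \mathbb{N}} F(n)$ be the associated Rees module and let $\varphi \colon N \to N$ be the $R$-linear map ('multiplication by $t$') which sends the degree-$(n+1)$ component into the degree-$n$ component via the inclusion $F(n+1) \subseteq F(n)$. Then the inverse limit of the tower $\cdots \xrightarrow{\varphi} N \xrightarrow{\varphi} N$ vanishes — that is, the only sequence $x \colon \mathbb{N} \to N$ satisfying $\varphi(x_{k+1})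 = x_k$ for all $k$ is the zero sequence — if and only if $\bigcap_{n \in \mathbb{N}} F(n) = 0$. -/
open DirectSum

/-- **`t`-completeness of the Rees module is equivalent to separatedness of the filtration**
(the classical, 1-categorical content of Proposition 4.8 of the paper).

Let `F : ℕ → Submodule R M` be a decreasing filtration, let `N = ⨁ₙ F n` be its Rees
module, and let `φ : N → N` be "multiplication by `t`", the `R`-linear map sending the
degree-`(n+1)` component into the degree-`n` component via the inclusion
`F (n+1) ⊆ F n` (and killing the degree-`0` component).  Then the inverse limit of the
tower `⋯ →φ N →φ N` vanishes — i.e. the only sequence `x : ℕ → N` with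
`φ (x (k+1)) = x k` for all `k` is the zero sequence — if and only if `⋂ₙ F n = 0`. -/
theorem rees_module_t_complete_iff_separated
    {R M : Type*} [CommRing R] [AddCommGroup M] [Module R M]
    (F : ℕ → Submodule R M) (hdec : ∀ n, F (n + 1) ≤ F n)
    (φ : (⨁ n : ℕ, F n) →ₗ[R] ⨁ n : ℕ, F n)
    (hφ0 : ∀ x : F 0, φ (DirectSum.lof R ℕ (fun n => F n) 0 x) = 0)
    (hφ : ∀ (n : ℕ) (x : F (n + 1)),
      φ (DirectSum.lof R ℕ (fun n => F n) (n + 1) x) =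
        DirectSum.lof R ℕ (fun n => F n) n ⟨(x : M), hdec n x.2⟩) :
    (∀ x : ℕ → ⨁ n : ℕ, F n, (∀ k, φ (x (k + 1)) = x k) → ∀ k, x k = 0) ↔
      (⨅ n : ℕ, F n) = ⊥ := by
  constructor
  · intro h
    rw [eq_bot_iff]
    intro m hm
    simp only [Submodule.mem_iInf] at hm
    have hx : ∀ k, φ (DirectSum.lof R ℕ (fun n => F n) (k + 1) ⟨m, hm (k + 1)⟩)
        = DirectSum.lof R ℕ (fun n => F n) k ⟨m, hm k⟩ := fun k => hφ k _
    have h0 := h (fun k => DirectSum.lof R ℕ (fun n => F n) k ⟨m, hm k⟩) hx 0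
    have h1 := congrArg (fun z : ⨁ n : ℕ, F n => z 0) h0
    simp only [DirectSum.lof_apply, DirectSum.zero_apply] at h1
    simpa [Submodule.mem_bot] using congrArg Subtype.val h1
  · intro hsep x hx k
    have key : ∀ y : ⨁ n : ℕ, F n, ∀ n, ((φ y) n : M) = (y (n + 1) : M) := by
      intro y
      induction y using DirectSum.induction_on with
      | zero => intro n; simp
      | of i b =>
        intro n
        rw [← DirectSum.lof_eq_of R]
        match i with
        | 0 =>
          rw [hφ0, DirectSum.lof_eq_of,
            DirectSum.of_eq_of_ne _ _ _ (by omega : n + 1 ≠ (0 : ℕ))]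
          simp
        | Nat.succ m =>
          rw [hφ m b]
          by_cases hn : n = m
          · subst hn
            rw [DirectSum.lof_apply, DirectSum.lof_apply]
          · rw [DirectSum.lof_eq_of, DirectSum.lof_eq_of,
              DirectSum.of_eq_of_ne _ _ _ (by omega : n ≠ m),
              DirectSum.of_eq_of_ne _ _ _ (by omega : n + 1 ≠ m + 1)]
            rfl
      | add a b ha hb =>
        intro n
        simp [map_add, DirectSum.add_apply, ha n, hb n]
    have chain : ∀ j n, ((x k) n : M) = ((x (k + j)) (n + j) : M) := by
      intro j
      induction j with
      | zero => intro n; simp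
      | succ j ih =>
        intro n
        rw [ih n, ← hx (k + j), key (x (k + j + 1)) (n + j)]
        rfl
    have hmem : ∀ n, ((x k) n : M) ∈ ⨅ i, F i := by
      intro n
      rw [Submodule.mem_iInf]
      intro i
      have hanti : Antitone F := antitone_nat_of_succ_le hdec
      exact hanti (Nat.le_add_left i n) (chain i n ▸ ((x (k + i)) (n + i)).2)
    refine DFinsupp.ext fun n => ?_
    have := hmem n
    rw [hsep, Submodule.mem_bot] at this
    exact Subtype.ext this
end
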